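/- There exist a concurrent epistemic game structure M, an agent a, a set of states P ⊆ St, and a state q such that M,q ⊨ ⟨⟨{a}⟩⟩◇P, yet q does not belong to the least fixpoint of the monotone operator X ↦ K_a P ∪ ⟨{a}⟩•X. (The steadfast fixpoint lower bound for reachability is not tight in general.) -/

import Mathlib

/-- A concurrent epistemic game structure (iCGS). -/
structure CEGS where
  Agt : Type
  St : Type
  AP : Type
  Act : Type
  agtFin : Finite Agt
  agtNe : Nonempty Agt
  stNe : Nonempty St
  actFin : Finite Act
  actNe : Nonempty Act
  V : AP → Set St
  d : Agt → St → Set Act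
  d_ne : ∀ a q, (d a q).Nonempty
  o : St → (Agt → Act) → St
  sim : Agt → St → St → Prop
  sim_equiv : ∀ a, Equivalence (sim a)
  uniform : ∀ a q q', sim a q q' → d a q = d a q'

namespace CEGS

variable (M : CEGS)

/-- An action profile available at state `q`. -/
def Avail (q : M.St) (α : M.Agt → M.Act) : Prop := ∀ a, α a ∈ M.d a q

/-- A path: an infinite sequence of states, each next state being the outcome of
some available action profile. -/
def IsPath (lam : ℕ → M.St) : Prop :=
  ∀ i, ∃ α, M.Avail (lam i) α ∧ lam (i + 1) = M.o (lam i) α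

/-- `s` is a collective ir-strategy (uniform, memoryless) for coalition `A`. -/
def IsIrStrat (A : Set M.Agt) (s : M.Agt → M.St → M.Act) : Prop :=
  ∀ a ∈ A, (∀ q, s a q ∈ M.d a q) ∧ (∀ q q', M.sim a q q' → s a q = s a q')

/-- `s` is a collective Ir-strategy (perfect information, memoryless) for coalition `A`. -/
def IsIrStratPI (A : Set M.Agt) (s : M.Agt → M.St → M.Act) : Prop :=
  ∀ a ∈ A, ∀ q, s a q ∈ M.d a q

/-- `lam ∈ out(q, s_A)`: a path starting at `q` along which every agent of `A` plays `s`. -/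
def InOut (A : Set M.Agt) (s : M.Agt → M.St → M.Act) (q : M.St) (lam : ℕ → M.St) : Prop :=
  lam 0 = q ∧ ∀ i, ∃ α, M.Avail (lam i) α ∧ (∀ a ∈ A, α a = s a (lam i)) ∧
    lam (i + 1) = M.o (lam i) α

/-- `lam ∈ out^ir(q, s_A) = ⋃_{a∈A} ⋃_{q ∼_a q'} out(q', s_A)`. -/
def InOutIr (A : Set M.Agt) (s : M.Agt → M.St → M.Act) (q : M.St) (lam : ℕ → M.St) : Prop :=
  ∃ a ∈ A, ∃ q', M.sim a q q' ∧ M.InOut A s q' lam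

/-- The "everybody knows" relation `∼_A^E = ⋃_{a∈A} ∼_a`. -/
def simE (A : Set M.Agt) (q q' : M.St) : Prop := ∃ a ∈ A, M.sim a q q'

/-- The "common knowledge" relation `∼_A^C`: transitive closure of `∼_A^E`. -/
def simC (A : Set M.Agt) : M.St → M.St → Prop := Relation.TransGen (M.simE A)

/-- Individual knowledge: `K_a X`. -/
def Know (a : M.Agt) (X : Set M.St) : Set M.St := {q | ∀ q', M.sim a q q' → q' ∈ X}

/-- Mutual knowledge: `E_A X`. -/
def EKnow (A : Set M.Agt) (X : Set M.St) : Set M.St := {q | ∀ q', M.simE A q q' → q' ∈ X}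

/-- Common knowledge: `C_A X`. -/
def CKnow (A : Set M.Agt) (X : Set M.St) : Set M.St := {q | ∀ q', M.simC A q q' → q' ∈ X}

/-- Next-step operator `⟨A⟩X` (imperfect information). -/
def Next (A : Set M.Agt) (X : Set M.St) : Set M.St :=
  {q | ∃ s, M.IsIrStrat A s ∧ ∀ lam, M.InOutIr A s q lam → lam 1 ∈ X}

/-- `Reach_M(s_A, Q, X)`. -/
def ReachSet (A : Set M.Agt) (s : M.Agt → M.St → M.Act) (Q X : Set M.St) : Set M.St :=
  {q | q ∈ Q ∧ ∀ lam, M.InOut A s q lam → ∃ i, lam i ∈ X ∧ ∀ j < i, lam j ∈ Q}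

/-- Steadfast next-step operator `⟨A⟩•X`. -/
def NextStead (A : Set M.Agt) (X : Set M.St) : Set M.St :=
  {q | ∃ s, M.IsIrStrat A s ∧
    M.ReachSet A s {q' | M.simC A q q'} X = {q' | M.simC A q q'}}

/-- `M,q ⊨ ⟨⟨A⟩⟩◇P` (ATLir reachability, ir-strategies). -/
def CanReach (A : Set M.Agt) (P : Set M.St) (q : M.St) : Prop :=
  ∃ s, M.IsIrStrat A s ∧ ∀ lam, M.InOutIr A s q lam → ∃ i, lam i ∈ P

/-- `M,q ⊨ ⟨⟨A⟩⟩□P` (ATLir safety, ir-strategies). -/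
def CanGlobally (A : Set M.Agt) (P : Set M.St) (q : M.St) : Prop :=
  ∃ s, M.IsIrStrat A s ∧ ∀ lam, M.InOutIr A s q lam → ∀ i, lam i ∈ P

/-- `M,q ⊨ ⟨⟨A⟩⟩ S U P` (ATLir until, ir-strategies). -/
def CanUntil (A : Set M.Agt) (S P : Set M.St) (q : M.St) : Prop :=
  ∃ s, M.IsIrStrat A s ∧ ∀ lam, M.InOutIr A s q lam →
    ∃ i, lam i ∈ P ∧ ∀ j < i, lam j ∈ S

/-- Perfect-information next-step operator `N^Ir_A(X)`. -/
def NextPI (A : Set M.Agt) (X : Set M.St) : Set M.St :=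
  {q | ∃ t, M.IsIrStratPI A t ∧ ∀ lam, M.InOut A t q lam → lam 1 ∈ X}

/-- Perfect-information "globally" operator `G^Ir_A(X)`. -/
def GloballyPI (A : Set M.Agt) (X : Set M.St) : Set M.St :=
  {q | ∃ t, M.IsIrStratPI A t ∧ ∀ lam, M.InOut A t q lam → ∀ i, lam i ∈ X}

/-- Perfect-information "until" operator `U^Ir_A(Y, X)`. -/
def UntilPI (A : Set M.Agt) (Y X : Set M.St) : Set M.St :=
  {q | ∃ t, M.IsIrStratPI A t ∧ ∀ lam, M.InOut A t q lam →
    ∃ i, lam i ∈ X ∧ ∀ j < i, lam j ∈ Y}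

end CEGS

/-- Knaster–Tarski least fixpoint of a set operator. -/
def lfpSet {σ : Type} (f : Set σ → Set σ) : Set σ := sInf {X | f X ⊆ X}

/-- Knaster–Tarski greatest fixpoint of a set operator. -/
def gfpSet {σ : Type} (f : Set σ → Set σ) : Set σ := sSup {X | X ⊆ f X}


def nxt : Fin 5 → Fin 5 := ![2, 4, 1, 4, 4]

def Mex : CEGS where
  Agt := Unit
  St := Fin 5
  AP := Unit
  Act := Unit
  agtFin := inferInstance
  agtNe := inferInstance
  stNe := inferInstance
  actFin := inferInstance
  actNe := inferInstance
  V := fun _ => ∅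
  d := fun _ _ => Set.univ
  d_ne := fun _ _ => ⟨(), trivial⟩
  o := fun q _ => nxt q
  sim := fun _ q q' => q.val / 2 = q'.val / 2
  sim_equiv := fun _ => ⟨fun _ => rfl, fun h => h.symm, fun h h' => h.trans h'⟩
  uniform := fun _ _ _ _ => rfl

instance (n : ℕ) : OfNat Mex.St n := inferInstanceAs (OfNat (Fin 5) n)
instance : Fintype Mex.St := inferInstanceAs (Fintype (Fin 5))
instance : DecidableEq Mex.St := inferInstanceAs (DecidableEq (Fin 5))

lemma simC_imp {q q' : Fin 5} (h : Mex.simC {()} q q') : q.val / 2 = q'.val / 2 := by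
  induction h with
  | single h => obtain ⟨a, -, h⟩ := h; exact h
  | tail _ h ih => obtain ⟨a, -, h⟩ := h; exact ih.trans h

lemma simC_of (q q' : Fin 5) (h : q.val / 2 = q'.val / 2) : Mex.simC {()} q q' :=
  Relation.TransGen.single ⟨(), rfl, h⟩

lemma path_InOut (s : Unit → Fin 5 → Unit) (b : Fin 5) :
    Mex.InOut {()} s b (fun i => nxt^[i] b) := by
  refine ⟨rfl, fun i => ⟨fun a => s a (nxt^[i] b), fun a => trivial, fun a _ => rfl, ?_⟩⟩
  exact Function.iterate_succ_apply' nxt i b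

lemma not_stead (q b : Fin 5) (hqb : Mex.simC {()} q b)
    (h1 : ¬ Mex.simC {()} q (nxt b)) (h04 : b ≠ 4) (h14 : nxt b ≠ 4) :
    q ∉ Mex.NextStead {()} ({4} : Set (Fin 5)) := by
  rintro ⟨s, -, hreach⟩
  have hb : b ∈ Mex.ReachSet {()} s {q' | Mex.simC {()} q q'} {4} := by
    exact (Set.ext_iff.mp hreach b).mpr hqb
  obtain ⟨-, hall⟩ := hb
  obtain ⟨i, hi, hj⟩ := hall _ (path_InOut s b)
  match i, hi with
  | 0, hi => exact h04 hi
  | 1, hi => exact h14 hi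
  | (n+2), hi => exact h1 (hj 1 (by omega))

/-- the steadfast fixpoint lower bound for reachability is not tight
in general. -/
theorem steadfast_fixpoint_not_tight :
    ∃ (M : CEGS) (a : M.Agt) (P : Set M.St) (q : M.St),
      M.CanReach {a} P q ∧
      q ∉ lfpSet (fun X => M.Know a P ∪ M.NextStead {a} X) := by
  refine ⟨Mex, (), ({4} : Set (Fin 5)), (0 : Fin 5), ?_, ?_⟩
  · refine ⟨fun _ _ => (), fun a _ => ⟨fun q => trivial, fun _ _ _ => rfl⟩, ?_⟩
    rintro lam ⟨a, -, q', hsim, h0, hstep⟩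
    have hrec : ∀ i, lam (i + 1) = nxt (lam i) := by
      intro i; obtain ⟨α, -, -, h⟩ := hstep i; exact h
    have hiter : ∀ i, lam i = nxt^[i] q' := by
      intro i
      induction i with
      | zero => exact h0
      | succ n ih => rw [hrec n, ih]; exact (Function.iterate_succ_apply' nxt n q').symm
    have hsim' : q'.val / 2 = 0 := by
      have : (0 : Fin 5).val / 2 = q'.val / 2 := hsim
      omega
    have hq' : q' = 0 ∨ q' = 1 := by
      have := q'.isLt
      rcases Nat.lt_or_ge q'.val 1 with h | h
      · left; exact Fin.ext (by omega)
      · right; exact Fin.ext (by omega)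
    rcases hq' with rfl | rfl
    · exact ⟨3, by rw [hiter 3]; rfl⟩
    · exact ⟨1, by rw [hiter 1]; rfl⟩
  · intro hmem
    have hsub : lfpSet (fun X => Mex.Know () {4} ∪ Mex.NextStead {()} X)
        ⊆ ({4} : Set (Fin 5)) := by
      apply sInf_le
      rintro q (hk | hn)
      · exact hk q rfl
      · by_contra hq4
        have hq4' : q ≠ 4 := fun h => hq4 h
        fin_cases q
        · exact not_stead 0 0 (simC_of _ _ rfl) (fun h => by
            exact absurd (simC_imp h) (by decide)) (by decide) (by decide) hn
        · exact not_stead 1 0 (simC_of _ _ rfl) (fun h => by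
            exact absurd (simC_imp h) (by decide)) (by decide) (by decide) hn
        · exact not_stead 2 2 (simC_of _ _ rfl) (fun h => by
            exact absurd (simC_imp h) (by decide)) (by decide) (by decide) hn
        · exact not_stead 3 2 (simC_of _ _ rfl) (fun h => by
            exact absurd (simC_imp h) (by decide)) (by decide) (by decide) hn
        · exact hq4' rfl
    have : (0 : Fin 5) = 4 := hsub hmem
    simp at this
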